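/- Let k > 0 and let x : (0,∞) → (0,∞) be a differentiable function of λ such that for every λ > 0 the master equation √(λ·x(λ)) · I'_{(k−2)/2}(√(λ·x(λ))) = (x(λ) − (k−2)/2) · I_{(k−2)/2}(√(λ·x(λ))) holds. Then for every λ > 0 with x(λ) + λ·x'(λ) ≠ 0, differentiating with respect to λ yields √(λ·x(λ)) · I''_{(k−2)/2}(√(λ·x(λ))) = (x(λ) − k/2) · I'_{(k−2)/2}(√(λ·x(λ))) + (2·√(λ·x(λ))·x'(λ)/(x(λ) + λ·x'(λ))) · I_{(k−2)/2}(√(λ·x(λ))), where I'_ν and I''_ν denote the first and second derivatives of I_ν. -/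

import Mathlib

open Real

/-- Modified Bessel function of the first kind, defined by its power series. -/
noncomputable def besselI (ν : ℝ) (x : ℝ) : ℝ :=
  ∑' m : ℕ, (x / 2) ^ (2 * (m : ℝ) + ν) / ((Nat.factorial m : ℝ) * Real.Gamma ((m : ℝ) + ν + 1))

namespace BesselIAux

open Filter Set FormalMultilinearSeries

/-- Coefficients of the auxiliary entire series. -/
noncomputable def c (ν : ℝ) (m : ℕ) : ℝ :=
  1 / ((Nat.factorial m : ℝ) * Real.Gamma ((m : ℝ) + ν + 1))

lemma gamma_pos {ν : ℝ} (hν : -1 < ν) (m : ℕ) : 0 < Real.Gamma ((m : ℝ) + ν + 1) := by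
  apply Real.Gamma_pos_of_pos
  have : (0:ℝ) ≤ (m:ℝ) := m.cast_nonneg
  linarith

lemma c_pos {ν : ℝ} (hν : -1 < ν) (m : ℕ) : 0 < c ν m := by
  have h1 := gamma_pos hν m
  have h2 : (0:ℝ) < (Nat.factorial m : ℝ) := by positivity
  unfold c; positivity

lemma ratio_tendsto {ν : ℝ} (hν : -1 < ν) :
    Tendsto (fun n : ℕ ↦ ‖c ν n.succ‖ / ‖c ν n‖) atTop (nhds 0) := by
  have key : ∀ n : ℕ, ‖c ν n.succ‖ / ‖c ν n‖ = (((n:ℝ)+1) * ((n:ℝ)+ν+1))⁻¹ := by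
    intro n
    have hΓ : Real.Gamma ((n.succ : ℝ) + ν + 1)
        = ((n:ℝ) + ν + 1) * Real.Gamma ((n:ℝ) + ν + 1) := by
      have hnν : (0:ℝ) < (n:ℝ) + ν + 1 := by
        have : (0:ℝ) ≤ (n:ℝ) := n.cast_nonneg; linarith
      have h := Real.Gamma_add_one hnν.ne'
      push_cast
      rw [show (n:ℝ) + 1 + ν + 1 = ((n:ℝ) + ν + 1) + 1 by ring, h]
    have hΓpos := gamma_pos hν n
    have hfac : (0:ℝ) < (Nat.factorial n : ℝ) := by positivity
    have hnν : (0:ℝ) < (n:ℝ) + ν + 1 := by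
      have : (0:ℝ) ≤ (n:ℝ) := n.cast_nonneg; linarith
    rw [Real.norm_eq_abs, Real.norm_eq_abs, abs_of_pos (c_pos hν _), abs_of_pos (c_pos hν _)]
    unfold c
    rw [hΓ, Nat.factorial_succ]
    push_cast
    field_simp
  rw [tendsto_congr key]
  apply Tendsto.inv_tendsto_atTop
  apply Tendsto.atTop_mul_atTop₀
  · exact tendsto_atTop_add_const_right _ _ tendsto_natCast_atTop_atTop
  · exact tendsto_atTop_add_const_right _ _
      (tendsto_atTop_add_const_right _ _ tendsto_natCast_atTop_atTop)

lemma analytic_sum {ν : ℝ} (hν : -1 < ν) (t : ℝ) :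
    AnalyticAt ℝ (ofScalarsSum (E := ℝ) (c ν)) t := by
  have hrad : (ofScalars ℝ (c ν)).radius = ⊤ :=
    ofScalars_radius_eq_top_of_tendsto ℝ (c ν)
      (Eventually.of_forall fun n ↦ (c_pos hν n).ne') (ratio_tendsto hν)
  have hball : HasFPowerSeriesOnBall (ofScalarsSum (E := ℝ) (c ν)) (ofScalars ℝ (c ν)) 0
      (ofScalars ℝ (c ν)).radius :=
    (ofScalars ℝ (c ν)).hasFPowerSeriesOnBall (by rw [hrad]; exact ENNReal.zero_lt_top)
  exact hball.analyticAt_of_mem (by rw [hrad]; exact edist_lt_top t 0)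

lemma besselI_eq {ν : ℝ} (t : ℝ) (ht : 0 < t) :
    besselI ν t = (t/2) ^ ν * ofScalarsSum (E := ℝ) (c ν) (t^2/4) := by
  have ht2 : (0:ℝ) < t/2 := by linarith
  rw [ofScalars_sum_eq, besselI, ← tsum_mul_left]
  apply tsum_congr
  intro m
  have h1 : (t/2) ^ (2*(m:ℝ) + ν) = ((t/2)^2)^m * (t/2)^ν := by
    rw [Real.rpow_add ht2, show (2*(m:ℝ)) = ((2*m : ℕ) : ℝ) by push_cast; ring,
      Real.rpow_natCast, pow_mul]
  rw [h1]
  have h2 : (t/2)^2 = t^2/4 := by ring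
  rw [h2, smul_eq_mul, c]
  ring

lemma besselI_contDiffOn {ν : ℝ} (hν : -1 < ν) :
    ContDiffOn ℝ 2 (besselI ν) (Set.Ioi 0) := by
  have hG : ContDiffOn ℝ 2 (fun t : ℝ ↦ (t/2) ^ ν * ofScalarsSum (E := ℝ) (c ν) (t^2/4))
      (Set.Ioi 0) := by
    intro t ht
    apply ContDiffAt.contDiffWithinAt
    have h1 : ContDiffAt ℝ 2 (fun t : ℝ ↦ (t/2) ^ ν) t := by
      have := Real.contDiffAt_rpow_const_of_ne (p := ν) (n := 2)
        (x := t/2) (by have := Set.mem_Ioi.mp ht; positivity)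
      exact this.comp t (contDiffAt_id.div_const 2)
    have h2 : ContDiffAt ℝ 2 (fun t : ℝ ↦ ofScalarsSum (E := ℝ) (c ν) (t^2/4)) t :=
      ((analytic_sum hν (t^2/4)).contDiffAt).comp t ((contDiffAt_id.pow 2).div_const 4)
    exact h1.mul h2
  exact hG.congr fun t ht ↦ besselI_eq t (Set.mem_Ioi.mp ht)

end BesselIAux

theorem stmt_2 (k : ℝ) (hk : 0 < k) (x : ℝ → ℝ)
    (hxpos : ∀ lam : ℝ, 0 < lam → 0 < x lam)
    (hxdiff : ∀ lam : ℝ, 0 < lam → DifferentiableAt ℝ x lam)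
    (hmaster : ∀ lam : ℝ, 0 < lam →
      Real.sqrt (lam * x lam) * deriv (besselI ((k - 2) / 2)) (Real.sqrt (lam * x lam)) =
        (x lam - (k - 2) / 2) * besselI ((k - 2) / 2) (Real.sqrt (lam * x lam)) )
    (lam : ℝ) (hlam : 0 < lam) (hne : x lam + lam * deriv x lam ≠ 0) :
    Real.sqrt (lam * x lam) *
        deriv (deriv (besselI ((k - 2) / 2))) (Real.sqrt (lam * x lam)) =
      (x lam - k / 2) * deriv (besselI ((k - 2) / 2)) (Real.sqrt (lam * x lam)) +
        2 * Real.sqrt (lam * x lam) * deriv x lam / (x lam + lam * deriv x lam) *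
          besselI ((k - 2) / 2) (Real.sqrt (lam * x lam)) := by
  set ν := (k - 2) / 2 with hνdef
  have hν : -1 < ν := by rw [hνdef]; linarith
  set y := Real.sqrt (lam * x lam) with hydef
  have hxl : 0 < x lam := hxpos lam hlam
  have hy : 0 < y := Real.sqrt_pos.mpr (by positivity)
  -- smoothness of besselI near y
  have H : ContDiffOn ℝ 2 (besselI ν) (Set.Ioi 0) := BesselIAux.besselI_contDiffOn hν
  have H1 : ContDiffOn ℝ 1 (deriv (besselI ν)) (Set.Ioi 0) :=
    H.deriv_of_isOpen isOpen_Ioi (by norm_num)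
  have hdI : ∀ t : ℝ, 0 < t → DifferentiableAt ℝ (besselI ν) t := fun t ht ↦
    ((H.differentiableOn (by norm_num)) t (Set.mem_Ioi.mpr ht)).differentiableAt
      (Ioi_mem_nhds ht)
  have hdI' : DifferentiableAt ℝ (deriv (besselI ν)) y :=
    ((H1.differentiableOn (by norm_num)) y (Set.mem_Ioi.mpr hy)).differentiableAt
      (Ioi_mem_nhds hy)
  -- derivative of g l = sqrt (l * x l)
  set x' := deriv x lam with hx'def
  set s := x lam + lam * x' with hsdef
  have hinner : HasDerivAt (fun l : ℝ ↦ l * x l) s lam := by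
    have := (hasDerivAt_id' lam).mul (hxdiff lam hlam).hasDerivAt
    exact this.congr_deriv (by rw [hsdef, hx'def, one_mul])
  have hinner_ne : lam * x lam ≠ 0 := by positivity
  have hg : HasDerivAt (fun l : ℝ ↦ Real.sqrt (l * x l)) (s / (2 * y)) lam := by
    have := (Real.hasDerivAt_sqrt hinner_ne).comp lam hinner
    simpa [hydef, Function.comp_def, div_eq_mul_inv, mul_comm, mul_left_comm, mul_assoc] using this
  set I := besselI ν y with hIdef
  set I' := deriv (besselI ν) y with hI'def
  set I'' := deriv (deriv (besselI ν)) y with hI''def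
  set g' := s / (2 * y) with hg'def
  -- derivative of the master identity
  have h1 : HasDerivAt (fun l : ℝ ↦ deriv (besselI ν) (Real.sqrt (l * x l))) (I'' * g') lam :=
    by have := hdI'.hasDerivAt.comp lam hg; exact this
  have h2 : HasDerivAt (fun l : ℝ ↦ besselI ν (Real.sqrt (l * x l))) (I' * g') lam :=
    by have := (hdI y hy).hasDerivAt.comp lam hg; exact this
  have hF : HasDerivAt
      (fun l : ℝ ↦ Real.sqrt (l * x l) * deriv (besselI ν) (Real.sqrt (l * x l)) -
        (x l - ν) * besselI ν (Real.sqrt (l * x l)))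
      (g' * I' + y * (I'' * g') - (x' * I + (x lam - ν) * (I' * g'))) lam := by
    exact (hg.mul h1).sub
      ((((hxdiff lam hlam).hasDerivAt).sub_const ν).mul h2)
  have hF0 : HasDerivAt
      (fun l : ℝ ↦ Real.sqrt (l * x l) * deriv (besselI ν) (Real.sqrt (l * x l)) -
        (x l - ν) * besselI ν (Real.sqrt (l * x l))) 0 lam := by
    apply (hasDerivAt_const lam (0:ℝ)).congr_of_eventuallyEq
    filter_upwards [Ioi_mem_nhds hlam] with l hl
    rw [sub_eq_zero]
    exact hmaster l hl
  have hD : g' * I' + y * (I'' * g') - (x' * I + (x lam - ν) * (I' * g')) = 0 :=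
    hF.unique hF0
  -- algebra
  have hy0 : y ≠ 0 := hy.ne'
  have hs0 : s ≠ 0 := hne
  have hgoal : y * I'' = (x lam - k/2) * I' + 2 * y * x' / s * I := by
    have hgs : g' * (2*y) = s := by rw [hg'def]; field_simp
    have key : s*I' + y*I''*s - (2*y*x'*I + (x lam - ν)*I'*s) = 0 := by
      linear_combination (2*y) * hD - (I' + y*I'' - (x lam - ν)*I') * hgs
    rw [hνdef] at key
    field_simp
    linear_combination 2 * key
  exact hgoal
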